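/- Let H be a 4-uniform hypergraph with a balanced bipartition A ∪ B, |A| = |B| = n, chosen so that |H(A,A,B,B)| is minimum over all balanced bipartitions, and suppose δ₃(H) ≥ n−1. For v ∈ V define I_v = l_v^{AAB} − l_v^{ABB}. Then for all a ∈ A and b ∈ B, I_a ≥ I_b − 4n², where the error term accounts for edges containing both a and b. -/

import Mathlib

open Finset

/-- Number of triples of link type (i vertices in A, j vertices in B) in the link of `v`. -/
def linkCount {V : Type} [Fintype V] [DecidableEq V] (H : Finset (Finset V)) (v : V)
    (A B : Finset V) (i j : ℕ) : ℕ :=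
  (((Finset.univ : Finset V).powersetCard 3).filter
    (fun T => v ∉ T ∧ (T ∩ A).card = i ∧ (T ∩ B).card = j ∧ insert v T ∈ H)).card

/-- Bijection between edges through `v` satisfying `Q` and triples in the link of `v`. -/
lemma edge_link_card {V : Type} [Fintype V] [DecidableEq V] (H : Finset (Finset V))
    (hedges : ∀ e ∈ H, e.card = 4) (v : V) (Q : Finset V → Prop) [DecidablePred Q] :
    (H.filter (fun e => v ∈ e ∧ Q e)).card
      = (((Finset.univ : Finset V).powersetCard 3).filter
          (fun T => v ∉ T ∧ insert v T ∈ H ∧ Q (insert v T))).card := by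
  apply Finset.card_nbij' (i := fun e => e.erase v) (j := fun T => insert v T)
  · intro e he
    simp only [Finset.mem_coe, mem_filter, mem_powersetCard] at he ⊢
    obtain ⟨heH, hv, hQ⟩ := he
    have h4 := hedges e heH
    have hins : insert v (e.erase v) = e := insert_erase hv
    refine ⟨⟨subset_univ _, ?_⟩, notMem_erase _ _, by rw [hins]; exact heH,
      by rw [hins]; exact hQ⟩
    rw [card_erase_of_mem hv, h4]
  · intro T hT
    simp only [Finset.mem_coe, mem_filter, mem_powersetCard] at hT ⊢
    exact ⟨hT.2.2.1, mem_insert_self _ _, hT.2.2.2⟩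
  · intro e he
    simp only [Finset.mem_coe, mem_filter] at he
    exact insert_erase he.2.1
  · intro T hT
    simp only [Finset.mem_coe, mem_filter] at hT
    exact erase_insert hT.2.1

/-- Split a filtered count according to containment of `a` and `b`. -/
lemma card_filter_split3 {V : Type} [DecidableEq V] (H : Finset (Finset V))
    (P : Finset V → Prop) [DecidablePred P] (a b : V) :
    (H.filter P).card = (H.filter (fun e => P e ∧ (a ∈ e ↔ b ∈ e))).card
      + (H.filter (fun e => P e ∧ a ∈ e ∧ b ∉ e)).card
      + (H.filter (fun e => P e ∧ b ∈ e ∧ a ∉ e)).card := by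
  have h1 : H.filter (fun e => P e ∧ (a ∈ e ↔ b ∈ e))
      ∪ H.filter (fun e => P e ∧ a ∈ e ∧ b ∉ e)
      ∪ H.filter (fun e => P e ∧ b ∈ e ∧ a ∉ e) = H.filter P := by
    ext e; simp only [mem_union, mem_filter]; tauto
  have d2 : Disjoint (H.filter (fun e => P e ∧ (a ∈ e ↔ b ∈ e)))
      (H.filter (fun e => P e ∧ a ∈ e ∧ b ∉ e)) := by
    rw [Finset.disjoint_left]; intro e h1 h2
    simp only [mem_filter] at h1 h2; tauto
  have d1 : Disjoint (H.filter (fun e => P e ∧ (a ∈ e ↔ b ∈ e))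
      ∪ H.filter (fun e => P e ∧ a ∈ e ∧ b ∉ e))
      (H.filter (fun e => P e ∧ b ∈ e ∧ a ∉ e)) := by
    rw [Finset.disjoint_left]; intro e h1 h2
    simp only [mem_union, mem_filter] at h1 h2; tauto
  rw [← h1, card_union_of_disjoint d1, card_union_of_disjoint d2]

set_option maxHeartbeats 1600000 in
theorem stmt_15 {V : Type} [Fintype V] [DecidableEq V] (n : ℕ)
    (A B : Finset V) (H : Finset (Finset V))
    (hdisj : Disjoint A B) (hunion : A ∪ B = Finset.univ)
    (hA : A.card = n) (hB : B.card = n)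
    (hedges : ∀ e ∈ H, e.card = 4)
    (hdeg : ∀ S : Finset V, S.card = 3 →
      (n : ℝ) - 1 ≤ ((Finset.univ.filter (fun x => x ∉ S ∧ insert x S ∈ H)).card : ℝ))
    (hmin : ∀ A' B' : Finset V, Disjoint A' B' → A' ∪ B' = Finset.univ → A'.card = n →
      (H.filter (fun e => (e ∩ A).card = 2)).card ≤
        (H.filter (fun e => (e ∩ A').card = 2)).card) :
    ∀ a ∈ A, ∀ b ∈ B,
      ((linkCount H b A B 2 1 : ℝ) - (linkCount H b A B 1 2 : ℝ)) - 4 * n ^ 2 ≤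
        (linkCount H a A B 2 1 : ℝ) - (linkCount H a A B 1 2 : ℝ) := by
  intro a ha b hb
  have hd : ∀ x, x ∈ A → x ∉ B := fun x h1 h2 => Finset.disjoint_left.mp hdisj h1 h2
  have hab : a ≠ b := fun h => hd a ha (h ▸ hb)
  have hbA : b ∉ A := fun h => hd b h hb
  have haB : a ∉ B := hd a ha
  have hn1 : 1 ≤ n := hA ▸ Finset.card_pos.mpr ⟨a, ha⟩
  set A' : Finset V := insert b (A.erase a) with hA'def
  set B' : Finset V := insert a (B.erase b) with hB'def
  -- basic membership facts about A'
  have haA' : a ∉ A' := by simp [hA'def, hab]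
  have hbA' : b ∈ A' := mem_insert_self _ _
  have hmemA' : ∀ x, x ∈ A' ↔ x = b ∨ (x ≠ a ∧ x ∈ A) := by
    intro x; simp [hA'def, mem_insert, mem_erase]
  -- the swapped bipartition is balanced
  have hdisj' : Disjoint A' B' := by
    rw [Finset.disjoint_left]
    intro x hx hy
    simp only [hA'def, hB'def, mem_insert, mem_erase] at hx hy
    rcases hx with rfl | ⟨hxa, hxA⟩
    · rcases hy with h | ⟨h, _⟩ <;> [exact hab h.symm; exact h rfl]
    · rcases hy with rfl | ⟨_, hxB⟩ <;> [exact hxa rfl; exact hd x hxA hxB]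
  have hunion' : A' ∪ B' = Finset.univ := by
    ext x
    simp only [hA'def, hB'def, mem_union, mem_insert, mem_erase, mem_univ, iff_true]
    have hx : x ∈ A ∨ x ∈ B := by
      have := hunion ▸ mem_univ x
      simpa [mem_union] using this
    by_cases h1 : x = a
    · exact Or.inr (Or.inl h1)
    · by_cases h2 : x = b
      · exact Or.inl (Or.inl h2)
      · tauto
  have hcardA' : A'.card = n := by
    have hbnot : b ∉ A.erase a := by simp [mem_erase, hbA]
    rw [hA'def, card_insert_of_notMem hbnot, card_erase_of_mem ha, hA]
    omega
  have hmin' := hmin A' B' hdisj' hunion' hcardA'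
  -- intersections with A' for sets avoiding a and b
  have hTA' : ∀ T : Finset V, a ∉ T → b ∉ T → T ∩ A' = T ∩ A := by
    intro T haT hbT
    ext x
    simp only [mem_inter, hmemA']
    constructor
    · rintro ⟨hxT, rfl | ⟨_, hxA⟩⟩
      · exact absurd hxT hbT
      · exact ⟨hxT, hxA⟩
    · rintro ⟨hxT, hxA⟩
      exact ⟨hxT, Or.inr ⟨fun h => haT (h ▸ hxT), hxA⟩⟩
  -- the (iff) part is unchanged by the swap
  have hkey : ∀ e : Finset V, (a ∈ e ↔ b ∈ e) → (e ∩ A').card = (e ∩ A).card := by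
    intro e hiff
    by_cases hae : a ∈ e
    · have hbe : b ∈ e := hiff.mp hae
      have h1 : e ∩ A' = insert b ((e ∩ A).erase a) := by
        ext x
        simp only [mem_inter, hmemA', mem_insert, mem_erase]
        constructor
        · rintro ⟨hxe, h | ⟨hxa, hxA⟩⟩
          · exact Or.inl h
          · exact Or.inr ⟨hxa, hxe, hxA⟩
        · rintro (rfl | ⟨hxa, hxe, hxA⟩)
          · exact ⟨hbe, Or.inl rfl⟩
          · exact ⟨hxe, Or.inr ⟨hxa, hxA⟩⟩
      have haeA : a ∈ e ∩ A := mem_inter.mpr ⟨hae, ha⟩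
      have hbne : b ∉ (e ∩ A).erase a := by simp [mem_erase, mem_inter, hbA]
      have hpos : 0 < (e ∩ A).card := card_pos.mpr ⟨a, haeA⟩
      rw [h1, card_insert_of_notMem hbne, card_erase_of_mem haeA]
      omega
    · have hbe : b ∉ e := fun h => hae (hiff.mpr h)
      congr 1
      ext x
      simp only [mem_inter, hmemA']
      constructor
      · rintro ⟨hxe, rfl | ⟨_, hxA⟩⟩
        · exact absurd hxe hbe
        · exact ⟨hxe, hxA⟩
      · rintro ⟨hxe, hxA⟩
        exact ⟨hxe, Or.inr ⟨fun h => hae (h ▸ hxe), hxA⟩⟩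
  have hc0 : H.filter (fun e => (e ∩ A').card = 2 ∧ (a ∈ e ↔ b ∈ e))
      = H.filter (fun e => (e ∩ A).card = 2 ∧ (a ∈ e ↔ b ∈ e)) := by
    apply filter_congr
    intro e _
    constructor
    · rintro ⟨h1, h2⟩; exact ⟨by rw [← hkey e h2]; exact h1, h2⟩
    · rintro ⟨h1, h2⟩; exact ⟨by rw [hkey e h2]; exact h1, h2⟩
  -- edge counts via link triples
  have ea1 : (H.filter (fun e => (e ∩ A).card = 2 ∧ a ∈ e ∧ b ∉ e)).card
      = (((Finset.univ : Finset V).powersetCard 3).filter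
          (fun T => a ∉ T ∧ b ∉ T ∧ (T ∩ A).card = 1 ∧ insert a T ∈ H)).card := by
    have hre : H.filter (fun e => (e ∩ A).card = 2 ∧ a ∈ e ∧ b ∉ e)
        = H.filter (fun e => a ∈ e ∧ ((e ∩ A).card = 2 ∧ b ∉ e)) :=
      filter_congr (fun e _ => by tauto)
    rw [hre, edge_link_card H hedges a (fun e => (e ∩ A).card = 2 ∧ b ∉ e)]
    congr 1
    apply filter_congr
    intro T _
    have h2 : insert a T ∩ A = insert a (T ∩ A) := insert_inter_of_mem ha
    constructor
    · rintro ⟨haT, hH, hcard, hbT⟩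
      have h3 : a ∉ T ∩ A := fun h => haT (mem_inter.mp h).1
      rw [h2, card_insert_of_notMem h3] at hcard
      exact ⟨haT, fun h => hbT (mem_insert_of_mem h), by omega, hH⟩
    · rintro ⟨haT, hbT, hcard, hH⟩
      refine ⟨haT, hH, ?_, ?_⟩
      · rw [h2, card_insert_of_notMem (fun h => haT (mem_inter.mp h).1), hcard]
      · intro h
        rcases mem_insert.mp h with h | h
        · exact hab h.symm
        · exact hbT h
  have ea2 : (H.filter (fun e => (e ∩ A').card = 2 ∧ a ∈ e ∧ b ∉ e)).card
      = (((Finset.univ : Finset V).powersetCard 3).filter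
          (fun T => a ∉ T ∧ b ∉ T ∧ (T ∩ A).card = 2 ∧ insert a T ∈ H)).card := by
    have hre : H.filter (fun e => (e ∩ A').card = 2 ∧ a ∈ e ∧ b ∉ e)
        = H.filter (fun e => a ∈ e ∧ ((e ∩ A').card = 2 ∧ b ∉ e)) :=
      filter_congr (fun e _ => by tauto)
    rw [hre, edge_link_card H hedges a (fun e => (e ∩ A').card = 2 ∧ b ∉ e)]
    congr 1
    apply filter_congr
    intro T _
    constructor
    · rintro ⟨haT, hH, hcard, hbT⟩
      have hbT' : b ∉ T := fun h => hbT (mem_insert_of_mem h)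
      have h2 : insert a T ∩ A' = T ∩ A := by
        rw [insert_inter_of_notMem haA', hTA' T haT hbT']
      rw [h2] at hcard
      exact ⟨haT, hbT', hcard, hH⟩
    · rintro ⟨haT, hbT, hcard, hH⟩
      refine ⟨haT, hH, ?_, ?_⟩
      · rw [insert_inter_of_notMem haA', hTA' T haT hbT, hcard]
      · intro h
        rcases mem_insert.mp h with h | h
        · exact hab h.symm
        · exact hbT h
  have eb2 : (H.filter (fun e => (e ∩ A).card = 2 ∧ b ∈ e ∧ a ∉ e)).card
      = (((Finset.univ : Finset V).powersetCard 3).filter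
          (fun T => b ∉ T ∧ a ∉ T ∧ (T ∩ A).card = 2 ∧ insert b T ∈ H)).card := by
    have hre : H.filter (fun e => (e ∩ A).card = 2 ∧ b ∈ e ∧ a ∉ e)
        = H.filter (fun e => b ∈ e ∧ ((e ∩ A).card = 2 ∧ a ∉ e)) :=
      filter_congr (fun e _ => by tauto)
    rw [hre, edge_link_card H hedges b (fun e => (e ∩ A).card = 2 ∧ a ∉ e)]
    congr 1
    apply filter_congr
    intro T _
    have h2 : insert b T ∩ A = T ∩ A := insert_inter_of_notMem hbA
    constructor
    · rintro ⟨hbT, hH, hcard, haT⟩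
      rw [h2] at hcard
      exact ⟨hbT, fun h => haT (mem_insert_of_mem h), hcard, hH⟩
    · rintro ⟨hbT, haT, hcard, hH⟩
      refine ⟨hbT, hH, by rw [h2]; exact hcard, ?_⟩
      intro h
      rcases mem_insert.mp h with h | h
      · exact hab h
      · exact haT h
  have eb1 : (H.filter (fun e => (e ∩ A').card = 2 ∧ b ∈ e ∧ a ∉ e)).card
      = (((Finset.univ : Finset V).powersetCard 3).filter
          (fun T => b ∉ T ∧ a ∉ T ∧ (T ∩ A).card = 1 ∧ insert b T ∈ H)).card := by
    have hre : H.filter (fun e => (e ∩ A').card = 2 ∧ b ∈ e ∧ a ∉ e)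
        = H.filter (fun e => b ∈ e ∧ ((e ∩ A').card = 2 ∧ a ∉ e)) :=
      filter_congr (fun e _ => by tauto)
    rw [hre, edge_link_card H hedges b (fun e => (e ∩ A').card = 2 ∧ a ∉ e)]
    congr 1
    apply filter_congr
    intro T _
    constructor
    · rintro ⟨hbT, hH, hcard, haT⟩
      have haT' : a ∉ T := fun h => haT (mem_insert_of_mem h)
      have h2 : insert b T ∩ A' = insert b (T ∩ A) := by
        rw [insert_inter_of_mem hbA', hTA' T haT' hbT]
      have h3 : b ∉ T ∩ A := fun h => hbA (mem_inter.mp h).2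
      rw [h2, card_insert_of_notMem h3] at hcard
      exact ⟨hbT, haT', by omega, hH⟩
    · rintro ⟨hbT, haT, hcard, hH⟩
      refine ⟨hbT, hH, ?_, ?_⟩
      · rw [insert_inter_of_mem hbA', hTA' T haT hbT,
          card_insert_of_notMem (fun h => hbA (mem_inter.mp h).2), hcard]
      · intro h
        rcases mem_insert.mp h with h | h
        · exact hab h
        · exact haT h
  -- the main inequality on link counts, from minimality
  have hsplitA := card_filter_split3 H (fun e => (e ∩ A).card = 2) a b
  have hsplitA' := card_filter_split3 H (fun e => (e ∩ A').card = 2) a b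
  have hc0card : (H.filter (fun e => (e ∩ A').card = 2 ∧ (a ∈ e ↔ b ∈ e))).card
      = (H.filter (fun e => (e ∩ A).card = 2 ∧ (a ∈ e ↔ b ∈ e))).card := by rw [hc0]
  rw [hsplitA, hsplitA', hc0card, ea1, ea2, eb2, eb1] at hmin'
  -- linkCount simplification
  have hlc : ∀ (v : V) (i j : ℕ), i + j = 3 → linkCount H v A B i j
      = (((Finset.univ : Finset V).powersetCard 3).filter
          (fun T => v ∉ T ∧ (T ∩ A).card = i ∧ insert v T ∈ H)).card := by
    intro v i j hij
    unfold linkCount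
    congr 1
    apply filter_congr
    intro T hT
    rw [mem_powersetCard] at hT
    have hdAB : Disjoint (T ∩ A) (T ∩ B) :=
      hdisj.mono inter_subset_right inter_subset_right
    have h3 : (T ∩ A).card + (T ∩ B).card = 3 := by
      rw [← card_union_of_disjoint hdAB, ← inter_union_distrib_left, hunion,
        inter_univ, hT.2]
    constructor
    · rintro ⟨h1, h2, _, h4⟩; exact ⟨h1, h2, h4⟩
    · rintro ⟨h1, h2, h4⟩; exact ⟨h1, h2, by omega, h4⟩
  -- split link counts by containment of the other special vertex
  have hsplit_link : ∀ (v w : V) (i : ℕ),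
      (((Finset.univ : Finset V).powersetCard 3).filter
          (fun T => v ∉ T ∧ (T ∩ A).card = i ∧ insert v T ∈ H)).card
      = (((Finset.univ : Finset V).powersetCard 3).filter
          (fun T => v ∉ T ∧ w ∉ T ∧ (T ∩ A).card = i ∧ insert v T ∈ H)).card
      + (((Finset.univ : Finset V).powersetCard 3).filter
          (fun T => v ∉ T ∧ w ∈ T ∧ (T ∩ A).card = i ∧ insert v T ∈ H)).card := by
    intro v w i
    rw [← card_filter_add_card_filter_not (p := fun T => w ∉ T)
      (s := ((Finset.univ : Finset V).powersetCard 3).filter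
        (fun T => v ∉ T ∧ (T ∩ A).card = i ∧ insert v T ∈ H)), filter_filter, filter_filter]
    have h1 : ((Finset.univ : Finset V).powersetCard 3).filter
        (fun T => (v ∉ T ∧ (T ∩ A).card = i ∧ insert v T ∈ H) ∧ w ∉ T)
        = ((Finset.univ : Finset V).powersetCard 3).filter
          (fun T => v ∉ T ∧ w ∉ T ∧ (T ∩ A).card = i ∧ insert v T ∈ H) :=
      filter_congr (fun T _ => by tauto)
    have h2 : ((Finset.univ : Finset V).powersetCard 3).filter
        (fun T => (v ∉ T ∧ (T ∩ A).card = i ∧ insert v T ∈ H) ∧ ¬w ∉ T)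
        = ((Finset.univ : Finset V).powersetCard 3).filter
          (fun T => v ∉ T ∧ w ∈ T ∧ (T ∩ A).card = i ∧ insert v T ∈ H) :=
      filter_congr (fun T _ => by tauto)
    rw [h1, h2]
  have g1 : linkCount H a A B 2 1
      = (((Finset.univ : Finset V).powersetCard 3).filter
          (fun T => a ∉ T ∧ b ∉ T ∧ (T ∩ A).card = 2 ∧ insert a T ∈ H)).card
      + (((Finset.univ : Finset V).powersetCard 3).filter
          (fun T => a ∉ T ∧ b ∈ T ∧ (T ∩ A).card = 2 ∧ insert a T ∈ H)).card := by
    rw [hlc a 2 1 (by norm_num), hsplit_link a b 2]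
  have g2 : linkCount H a A B 1 2
      = (((Finset.univ : Finset V).powersetCard 3).filter
          (fun T => a ∉ T ∧ b ∉ T ∧ (T ∩ A).card = 1 ∧ insert a T ∈ H)).card
      + (((Finset.univ : Finset V).powersetCard 3).filter
          (fun T => a ∉ T ∧ b ∈ T ∧ (T ∩ A).card = 1 ∧ insert a T ∈ H)).card := by
    rw [hlc a 1 2 (by norm_num), hsplit_link a b 1]
  have g3 : linkCount H b A B 2 1
      = (((Finset.univ : Finset V).powersetCard 3).filter
          (fun T => b ∉ T ∧ a ∉ T ∧ (T ∩ A).card = 2 ∧ insert b T ∈ H)).card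
      + (((Finset.univ : Finset V).powersetCard 3).filter
          (fun T => b ∉ T ∧ a ∈ T ∧ (T ∩ A).card = 2 ∧ insert b T ∈ H)).card := by
    rw [hlc b 2 1 (by norm_num), hsplit_link b a 2]
  have g4 : linkCount H b A B 1 2
      = (((Finset.univ : Finset V).powersetCard 3).filter
          (fun T => b ∉ T ∧ a ∉ T ∧ (T ∩ A).card = 1 ∧ insert b T ∈ H)).card
      + (((Finset.univ : Finset V).powersetCard 3).filter
          (fun T => b ∉ T ∧ a ∈ T ∧ (T ∩ A).card = 1 ∧ insert b T ∈ H)).card := by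
    rw [hlc b 1 2 (by norm_num), hsplit_link b a 1]
  -- bound on the correction terms
  have hV : (Finset.univ : Finset V).card = 2 * n := by
    rw [← hunion, card_union_of_disjoint hdisj, hA, hB]; ring
  have hEbound : ∀ v : V,
      (((Finset.univ : Finset V).powersetCard 3).filter (fun T => v ∈ T)).card ≤ 2 * n ^ 2 := by
    intro v
    have h1 : (((Finset.univ : Finset V).powersetCard 3).filter (fun T => v ∈ T)).card
        ≤ ((Finset.univ : Finset V).powersetCard 2).card := by
      apply card_le_card_of_injOn (fun T => T.erase v)
      · intro T hT
        simp only [Finset.mem_coe, mem_filter, mem_powersetCard] at hT ⊢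
        exact ⟨subset_univ _, by rw [card_erase_of_mem hT.2, hT.1.2]⟩
      · intro T1 h1 T2 h2 he
        simp only [Finset.coe_filter, Set.mem_setOf_eq, mem_powersetCard] at h1 h2
        replace he : T1.erase v = T2.erase v := he
        have h3 : insert v (T1.erase v) = insert v (T2.erase v) := by rw [he]
        rwa [insert_erase h1.2, insert_erase h2.2] at h3
    rw [card_powersetCard, hV] at h1
    have h2 : (2 * n).choose 2 ≤ 2 * n ^ 2 := by
      rw [Nat.choose_two_right]
      have h3 : 2 * n * (2 * n - 1) ≤ 2 * (2 * n ^ 2) := by nlinarith [Nat.sub_le (2 * n) 1]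
      calc 2 * n * (2 * n - 1) / 2 ≤ 2 * (2 * n ^ 2) / 2 := Nat.div_le_div_right h3
        _ = 2 * n ^ 2 := Nat.mul_div_cancel_left _ (by norm_num)
    exact le_trans h1 h2
  have hEa : (((Finset.univ : Finset V).powersetCard 3).filter
      (fun T => a ∉ T ∧ b ∈ T ∧ (T ∩ A).card = 1 ∧ insert a T ∈ H)).card ≤ 2 * n ^ 2 := by
    refine le_trans (card_le_card ?_) (hEbound b)
    intro T hT
    simp only [mem_filter] at hT ⊢
    exact ⟨hT.1, hT.2.2.1⟩
  have hEb : (((Finset.univ : Finset V).powersetCard 3).filter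
      (fun T => b ∉ T ∧ a ∈ T ∧ (T ∩ A).card = 2 ∧ insert b T ∈ H)).card ≤ 2 * n ^ 2 := by
    refine le_trans (card_le_card ?_) (hEbound a)
    intro T hT
    simp only [mem_filter] at hT ⊢
    exact ⟨hT.1, hT.2.2.1⟩
  rw [g1, g2, g3, g4]
  have hm : ((((Finset.univ : Finset V).powersetCard 3).filter
        (fun T => a ∉ T ∧ b ∉ T ∧ (T ∩ A).card = 1 ∧ insert a T ∈ H)).card : ℝ)
      + (((Finset.univ : Finset V).powersetCard 3).filter
        (fun T => b ∉ T ∧ a ∉ T ∧ (T ∩ A).card = 2 ∧ insert b T ∈ H)).card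
      ≤ ((((Finset.univ : Finset V).powersetCard 3).filter
        (fun T => a ∉ T ∧ b ∉ T ∧ (T ∩ A).card = 2 ∧ insert a T ∈ H)).card : ℝ)
      + (((Finset.univ : Finset V).powersetCard 3).filter
        (fun T => b ∉ T ∧ a ∉ T ∧ (T ∩ A).card = 1 ∧ insert b T ∈ H)).card := by
    exact_mod_cast by omega
  have hEaR : ((((Finset.univ : Finset V).powersetCard 3).filter
      (fun T => a ∉ T ∧ b ∈ T ∧ (T ∩ A).card = 1 ∧ insert a T ∈ H)).card : ℝ)
      ≤ 2 * (n : ℝ) ^ 2 := by exact_mod_cast hEa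
  have hEbR : ((((Finset.univ : Finset V).powersetCard 3).filter
      (fun T => b ∉ T ∧ a ∈ T ∧ (T ∩ A).card = 2 ∧ insert b T ∈ H)).card : ℝ)
      ≤ 2 * (n : ℝ) ^ 2 := by exact_mod_cast hEb
  push_cast
  linarith
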